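/- Fix K ≥ 1 and let Λ₊ = { λ ∈ ℝ^K : λ_k ≥ 0 for all k, λ ≠ 0 }. For each I ∈ ℕ let T_I be a random vector in ℝ^K on a probability space, μ_I ∈ ℝ^K, and Σ_I a K×K symmetric positive definite matrix. Suppose (i) I⁻¹ Σ_I converges to a positive definite matrix M as I → ∞, and (ii) the law of Σ_I^{−1/2}(T_I − μ_I) converges weakly to π, the product of K standard Gaussian measures on ℝ^K. Define A_I = sup_{λ ∈ Λ₊} λᵀ(T_I − μ_I) / (λᵀ Σ_I λ)^{1/2}. Then the law of max(0, A_I)² converges weakly to the pushforward of π under the map w ↦ wᵀ w − inf_{θ ∈ ℝ^K, θ_k ≥ 0 for all k} (M^{−1/2} w − θ)ᵀ M (M^{−1/2} w − θ). (Theorem 1: this limit law is the chi-bar-squared distribution χ̄²(M^{−1}, Λ₊).) -/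

import Mathlib

open Matrix MeasureTheory ProbabilityTheory Filter

/-- The square root of a positive semidefinite matrix, as `Matrix.PosSemidef.sqrt` was defined in
Mathlib of December 2024 (removed since): `U * diagonal (√ ∘ eigenvalues) * U⋆`. -/
noncomputable def Matrix.PosSemidef.sqrt {n : Type*} [Fintype n] [DecidableEq n] {𝕜 : Type*}
    [RCLike 𝕜] [PartialOrder 𝕜] {A : Matrix n n 𝕜} (hA : A.PosSemidef) : Matrix n n 𝕜 :=
  hA.isHermitian.eigenvectorUnitary.1 * diagonal ((↑) ∘ (√·) ∘ hA.isHermitian.eigenvalues) *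
    (star hA.isHermitian.eigenvectorUnitary : Matrix n n 𝕜)

namespace Matrix.PosSemidef

open scoped MatrixOrder

lemma sqrt_eq_cfcSqrt {n : Type*} [Fintype n] [DecidableEq n] {A : Matrix n n ℝ}
    (hA : A.PosSemidef) : hA.sqrt = CFC.sqrt A := by
  rw [CFC.sqrt_eq_cfc, cfc_nnreal_eq_real _ A hA.nonneg, hA.1.cfc_eq, IsHermitian.cfc,
    Unitary.conjStarAlgAut_apply, Matrix.PosSemidef.sqrt]
  congr 3
  funext i
  simp [Real.coe_toNNReal', max_eq_left (hA.eigenvalues_nonneg i)]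

lemma posSemidef_sqrt {n : Type*} [Fintype n] [DecidableEq n] {A : Matrix n n ℝ}
    (hA : A.PosSemidef) : hA.sqrt.PosSemidef := by
  rw [sqrt_eq_cfcSqrt]
  exact nonneg_iff_posSemidef.mp (CFC.sqrt_nonneg A)

lemma sqrt_mul_self {n : Type*} [Fintype n] [DecidableEq n] {A : Matrix n n ℝ}
    (hA : A.PosSemidef) : hA.sqrt * hA.sqrt = A := by
  rw [sqrt_eq_cfcSqrt]
  exact CFC.sqrt_mul_sqrt_self A hA.nonneg

lemma eq_sqrt_of_sq_eq {n : Type*} [Fintype n] [DecidableEq n] {A B : Matrix n n ℝ}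
    (hB : B.PosSemidef) (hA : A.PosSemidef) (h : B ^ 2 = A) : B = hA.sqrt := by
  rw [sqrt_eq_cfcSqrt, eq_comm, CFC.sqrt_eq_iff A B hA.nonneg hB.nonneg, ← pow_two, h]

end Matrix.PosSemidef

namespace Stmt10Aux

open Matrix MeasureTheory ProbabilityTheory Filter Topology Metric
open scoped RealInnerProductSpace


variable {K : ℕ}

noncomputable def toE {K : ℕ} : (Fin K → ℝ) ≃L[ℝ] EuclideanSpace ℝ (Fin K) :=
  (EuclideanSpace.equiv (Fin K) ℝ).symm

@[simp] lemma toE_apply (x : Fin K → ℝ) (i : Fin K) : toE x i = x i := rfl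

lemma inner_toE (x y : Fin K → ℝ) : ⟪toE x, toE y⟫ = x ⬝ᵥ y := by
  simp [toE, PiLp.inner_apply, dotProduct, RCLike.inner_apply, mul_comm]

lemma norm_toE_sq (x : Fin K → ℝ) : ‖toE x‖ ^ 2 = x ⬝ᵥ x := by
  rw [← real_inner_self_eq_norm_sq, inner_toE]

/-- The closed convex cone generated by the columns of `B`. -/
def cone (B : Matrix (Fin K) (Fin K) ℝ) : Set (EuclideanSpace ℝ (Fin K)) :=
  {x | ∃ θ : Fin K → ℝ, (∀ k, 0 ≤ θ k) ∧ x = toE (B *ᵥ θ)}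

lemma zero_mem_cone (B : Matrix (Fin K) (Fin K) ℝ) : 0 ∈ cone B :=
  ⟨0, fun _ => le_refl 0, by simp [Matrix.mulVec_zero]⟩

lemma cone_nonempty (B : Matrix (Fin K) (Fin K) ℝ) : (cone B).Nonempty :=
  ⟨0, zero_mem_cone B⟩

lemma convex_cone (B : Matrix (Fin K) (Fin K) ℝ) : Convex ℝ (cone B) := by
  rintro x ⟨θ, hθ, rfl⟩ y ⟨η, hη, rfl⟩ a b ha hb _
  refine ⟨a • θ + b • η, fun k => ?_, ?_⟩
  · simp only [Pi.add_apply, Pi.smul_apply, smul_eq_mul]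
    have h1 := hθ k; have h2 := hη k; positivity
  simp [Matrix.mulVec_add, Matrix.mulVec_smul, smul_smul]

lemma cone_smul_eq (B : Matrix (Fin K) (Fin K) ℝ) {c : ℝ} (hc : 0 < c) :
    cone (c • B) = cone B := by
  ext x
  constructor
  · rintro ⟨θ, hθ, rfl⟩
    refine ⟨c • θ, fun k => ?_, ?_⟩
    · simp only [Pi.smul_apply, smul_eq_mul]; have := hθ k; positivity
    · simp [Matrix.smul_mulVec, Matrix.mulVec_smul]
  · rintro ⟨θ, hθ, rfl⟩
    refine ⟨c⁻¹ • θ, fun k => ?_, ?_⟩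
    · simp only [Pi.smul_apply, smul_eq_mul]; have := hθ k; positivity
    · simp [Matrix.smul_mulVec, Matrix.mulVec_smul, smul_smul,
        mul_inv_cancel₀ hc.ne', inv_mul_cancel₀ hc.ne']

lemma continuous_mulVec (A : Matrix (Fin K) (Fin K) ℝ) :
    Continuous fun v : Fin K → ℝ => A *ᵥ v :=
  continuous_const.matrix_mulVec continuous_id

lemma isClosed_cone {B : Matrix (Fin K) (Fin K) ℝ} (hB : IsUnit B.det) :
    IsClosed (cone B) := by
  have hset : cone B = (fun x : EuclideanSpace ℝ (Fin K) => B⁻¹ *ᵥ (toE.symm x)) ⁻¹'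
      {θ : Fin K → ℝ | ∀ k, 0 ≤ θ k} := by
    ext x
    constructor
    · rintro ⟨θ, hθ, rfl⟩
      have : toE.symm (toE (B *ᵥ θ)) = B *ᵥ θ := toE.symm_apply_apply _
      simpa [this, Matrix.mulVec_mulVec, Matrix.nonsing_inv_mul B hB] using hθ
    · intro hx
      refine ⟨B⁻¹ *ᵥ (toE.symm x), hx, ?_⟩
      rw [Matrix.mulVec_mulVec, Matrix.mul_nonsing_inv B hB, Matrix.one_mulVec]
      exact (toE.apply_symm_apply x).symm
  rw [hset]
  have hcl : IsClosed {θ : Fin K → ℝ | ∀ k, 0 ≤ θ k} := by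
    have : {θ : Fin K → ℝ | ∀ k, 0 ≤ θ k} = ⋂ k, {θ : Fin K → ℝ | 0 ≤ θ k} := by
      ext; simp
    rw [this]
    exact isClosed_iInter fun k => isClosed_le continuous_const (continuous_apply k)
  exact hcl.preimage ((continuous_mulVec _).comp toE.symm.continuous)

/-- Existence and properties of the metric projection onto the cone. -/
lemma exists_proj {B : Matrix (Fin K) (Fin K) ℝ} (hB : IsUnit B.det)
    (w : EuclideanSpace ℝ (Fin K)) :
    ∃ p ∈ cone B, ‖w - p‖ = infDist w (cone B) ∧
      (∀ v ∈ cone B, ⟪w - p, v⟫ ≤ 0) ∧ ⟪w - p, p⟫ = 0 := by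
  obtain ⟨p, hp, hd⟩ := (isClosed_cone hB).exists_infDist_eq_dist (cone_nonempty B) w
  have hnorm : ‖w - p‖ = infDist w (cone B) := by rw [hd, dist_eq_norm]
  have hiInf : ‖w - p‖ = ⨅ v : cone B, ‖w - v‖ := by
    rw [hnorm, infDist_eq_iInf]
    simp only [dist_eq_norm]
  have hle : ∀ v ∈ cone B, ⟪w - p, v - p⟫ ≤ 0 :=
    (norm_eq_iInf_iff_real_inner_le_zero (convex_cone B) hp).1 hiInf
  have h2p : (2 : ℝ) • p ∈ cone B := by
    obtain ⟨θ, hθ, hpθ⟩ := hp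
    refine ⟨(2 : ℝ) • θ, fun k => ?_, ?_⟩
    · simp only [Pi.smul_apply, smul_eq_mul]; have := hθ k; positivity
    · rw [hpθ]; simp [Matrix.mulVec_smul]
  have h1 : ⟪w - p, p⟫ ≤ 0 := by
    have h := hle _ h2p
    have heq : (2 : ℝ) • p - p = p := by
      rw [two_smul]; abel
    rwa [heq] at h
  have h2 : 0 ≤ ⟪w - p, p⟫ := by
    have := hle _ (zero_mem_cone B)
    rw [zero_sub, inner_neg_right] at this
    linarith
  have hperp : ⟪w - p, p⟫ = 0 := le_antisymm h1 h2
  refine ⟨p, hp, hnorm, fun v hv => ?_, hperp⟩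
  have := hle v hv
  rw [inner_sub_right, hperp] at this
  linarith [this]


lemma dot_symm_mulVec {S : Matrix (Fin K) (Fin K) ℝ} (hS : S.IsSymm) (lam w : Fin K → ℝ) :
    lam ⬝ᵥ (S *ᵥ w) = (S *ᵥ lam) ⬝ᵥ w := by
  rw [Matrix.dotProduct_mulVec]
  nth_rw 1 [← hS]
  rw [Matrix.vecMul_transpose]

lemma quad_eq {S : Matrix (Fin K) (Fin K) ℝ} (hS : S.IsSymm) (lam : Fin K → ℝ) :
    lam ⬝ᵥ (S * S) *ᵥ lam = (S *ᵥ lam) ⬝ᵥ (S *ᵥ lam) := by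
  rw [← Matrix.mulVec_mulVec, dot_symm_mulVec hS]

lemma mulVec_ne_zero {S : Matrix (Fin K) (Fin K) ℝ} (hdet : IsUnit S.det)
    {lam : Fin K → ℝ} (hne : lam ≠ 0) : S *ᵥ lam ≠ 0 := by
  intro h0
  apply hne
  have h1 : S⁻¹ *ᵥ (S *ᵥ lam) = 0 := by rw [h0]; simp
  rwa [Matrix.mulVec_mulVec, Matrix.nonsing_inv_mul _ hdet, Matrix.one_mulVec] at h1

lemma sSup_eq_proj (hK : 0 < K) {S : Matrix (Fin K) (Fin K) ℝ}
    (hS : S.IsSymm) (hdet : IsUnit S.det) (w : Fin K → ℝ)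
    {p : EuclideanSpace ℝ (Fin K)} (hp : p ∈ cone S)
    (hproj : ∀ v ∈ cone S, ⟪toE w - p, v⟫ ≤ 0) (hperp : ⟪toE w - p, p⟫ = 0) :
    max 0 (sSup {y : ℝ | ∃ lam : Fin K → ℝ, (∀ k, 0 ≤ lam k) ∧ lam ≠ 0 ∧
      y = lam ⬝ᵥ (S *ᵥ w) / Real.sqrt (lam ⬝ᵥ (S * S) *ᵥ lam)}) = ‖p‖ := by
  set Y := {y : ℝ | ∃ lam : Fin K → ℝ, (∀ k, 0 ≤ lam k) ∧ lam ≠ 0 ∧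
      y = lam ⬝ᵥ (S *ᵥ w) / Real.sqrt (lam ⬝ᵥ (S * S) *ᵥ lam)} with hY
  have hval : ∀ lam : Fin K → ℝ, lam ≠ 0 →
      lam ⬝ᵥ (S *ᵥ w) / Real.sqrt (lam ⬝ᵥ (S * S) *ᵥ lam)
        = ⟪toE (S *ᵥ lam), toE w⟫ / ‖toE (S *ᵥ lam)‖ := by
    intro lam hne
    rw [dot_symm_mulVec hS, quad_eq hS, ← inner_toE, ← inner_toE,
      real_inner_self_eq_norm_sq, Real.sqrt_sq (norm_nonneg _)]
  have hupos : ∀ lam : Fin K → ℝ, lam ≠ 0 → 0 < ‖toE (S *ᵥ lam)‖ := by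
    intro lam hne
    rw [norm_pos_iff]
    intro h0
    exact mulVec_ne_zero hdet hne (by simpa using congrArg toE.symm h0)
  have hub : ∀ y ∈ Y, y ≤ ‖p‖ := by
    rintro y ⟨lam, hlam, hne, rfl⟩
    rw [hval lam hne]
    set u := toE (S *ᵥ lam) with hu
    have hum : u ∈ cone S := ⟨lam, hlam, rfl⟩
    have h1 : ⟪toE w - p, u⟫ ≤ 0 := hproj u hum
    have h2 : ⟪u, p⟫ ≤ ‖u‖ * ‖p‖ := real_inner_le_norm u p
    have h3 : ⟪u, toE w⟫ ≤ ‖u‖ * ‖p‖ := by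
      have e1 : ⟪u, toE w⟫ = ⟪u, p⟫ + ⟪u, toE w - p⟫ := by
        rw [inner_sub_right]; ring
      rw [e1]
      have hcomm : ⟪u, toE w - p⟫ = ⟪toE w - p, u⟫ := real_inner_comm _ _
      linarith
    rw [div_le_iff₀ (hupos lam hne)]
    calc ⟪u, toE w⟫ ≤ ‖u‖ * ‖p‖ := h3
      _ = ‖p‖ * ‖u‖ := by ring
  have hlamone : (fun _ : Fin K => (1:ℝ)) ≠ 0 := by
    intro h
    have := congrFun h ⟨0, hK⟩
    norm_num at this
  have hYne : Y.Nonempty :=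
    ⟨_, ⟨fun _ => 1, fun _ => zero_le_one, hlamone, rfl⟩⟩
  have hbdd : BddAbove Y := ⟨‖p‖, fun y hy => hub y hy⟩
  have hsup_le : sSup Y ≤ ‖p‖ := csSup_le hYne hub
  by_cases hp0 : p = 0
  · rw [hp0, norm_zero]
    exact max_eq_left (by simpa [hp0] using hsup_le)
  · obtain ⟨θ, hθ, hpθ⟩ := hp
    have hθne : θ ≠ 0 := by
      rintro rfl
      exact hp0 (by simp [hpθ, Matrix.mulVec_zero])
    have hmem : ‖p‖ ∈ Y := by
      refine ⟨θ, hθ, hθne, ?_⟩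
      rw [hval θ hθne, ← hpθ]
      have e1 : ⟪p, toE w⟫ = ‖p‖ ^ 2 := by
        have c1 : ⟪toE w, p⟫ = ⟪toE w - p, p⟫ + ⟪p, p⟫ := by
          rw [inner_sub_left]; ring
        calc ⟪p, toE w⟫ = ⟪toE w, p⟫ := real_inner_comm _ _
          _ = ⟪toE w - p, p⟫ + ⟪p, p⟫ := c1
          _ = ‖p‖ ^ 2 := by rw [hperp, real_inner_self_eq_norm_sq]; ring
      rw [e1, pow_two, mul_div_assoc,
        div_self (norm_ne_zero_iff.2 hp0), mul_one]
    have : sSup Y = ‖p‖ := le_antisymm hsup_le (le_csSup hbdd hmem)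
    rw [this]
    exact max_eq_right (norm_nonneg p)

lemma key_identity (hK : 0 < K) {S : Matrix (Fin K) (Fin K) ℝ}
    (hS : S.IsSymm) (hdet : IsUnit S.det) (w : Fin K → ℝ) :
    max 0 (sSup {y : ℝ | ∃ lam : Fin K → ℝ, (∀ k, 0 ≤ lam k) ∧ lam ≠ 0 ∧
      y = lam ⬝ᵥ (S *ᵥ w) / Real.sqrt (lam ⬝ᵥ (S * S) *ᵥ lam)}) ^ 2
    = w ⬝ᵥ w - (infDist (toE w) (cone S)) ^ 2 := by
  obtain ⟨p, hp, hnorm, hproj, hperp⟩ := exists_proj hdet (toE w)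
  rw [sSup_eq_proj hK hS hdet w hp hproj hperp]
  have hpyth : ‖(toE w : EuclideanSpace ℝ (Fin K))‖ ^ 2 = ‖toE w - p‖ ^ 2 + ‖p‖ ^ 2 := by
    have := norm_add_sq_real (toE w - p) p
    rw [sub_add_cancel, hperp] at this
    linarith
  have h1 : w ⬝ᵥ w = ‖(toE w : EuclideanSpace ℝ (Fin K))‖ ^ 2 := (norm_toE_sq w).symm
  rw [h1, hpyth, ← hnorm]
  ring

lemma sInf_eq_infDist {S : Matrix (Fin K) (Fin K) ℝ} (hdet : IsUnit S.det) (w : Fin K → ℝ) :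
    sInf {y : ℝ | ∃ θ : Fin K → ℝ, (∀ k, 0 ≤ θ k) ∧
      y = (w - S *ᵥ θ) ⬝ᵥ (w - S *ᵥ θ)}
    = (infDist (toE w) (cone S)) ^ 2 := by
  obtain ⟨p, hp, hnorm, -, -⟩ := exists_proj hdet (toE w)
  have hval : ∀ θ : Fin K → ℝ, (w - S *ᵥ θ) ⬝ᵥ (w - S *ᵥ θ)
      = ‖toE w - toE (S *ᵥ θ)‖ ^ 2 := by
    intro θ
    have hsub : toE w - toE (S *ᵥ θ) = toE (w - S *ᵥ θ) := (map_sub toE w (S *ᵥ θ)).symm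
    rw [hsub, norm_toE_sq]
  have hlb : ∀ y ∈ {y : ℝ | ∃ θ : Fin K → ℝ, (∀ k, 0 ≤ θ k) ∧
      y = (w - S *ᵥ θ) ⬝ᵥ (w - S *ᵥ θ)}, (infDist (toE w) (cone S)) ^ 2 ≤ y := by
    rintro y ⟨θ, hθ, rfl⟩
    rw [hval θ]
    have h1 : infDist (toE w) (cone S) ≤ ‖toE w - toE (S *ᵥ θ)‖ := by
      have := infDist_le_dist_of_mem (s := cone S) (x := toE w) ⟨θ, hθ, rfl⟩
      rwa [dist_eq_norm] at this
    exact pow_le_pow_left₀ infDist_nonneg h1 2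
  obtain ⟨θp, hθp, hpθ⟩ := hp
  have hmem : (infDist (toE w) (cone S)) ^ 2 ∈ {y : ℝ | ∃ θ : Fin K → ℝ, (∀ k, 0 ≤ θ k) ∧
      y = (w - S *ᵥ θ) ⬝ᵥ (w - S *ᵥ θ)} := by
    refine ⟨θp, hθp, ?_⟩
    rw [hval θp, ← hpθ, hnorm]
  refine le_antisymm (csInf_le ?_ hmem) (le_csInf ⟨_, hmem⟩ hlb)
  refine ⟨0, fun y hy => ?_⟩
  obtain ⟨θ, hθ, rfl⟩ := hy
  rw [hval θ]
  positivity


noncomputable def matLin : Matrix (Fin K) (Fin K) ℝ →ₗ[ℝ]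
    (EuclideanSpace ℝ (Fin K) →L[ℝ] EuclideanSpace ℝ (Fin K)) :=
  (Matrix.toEuclideanLin.trans LinearMap.toContinuousLinearMap).toLinearMap

lemma matLin_toE (B : Matrix (Fin K) (Fin K) ℝ) (v : Fin K → ℝ) :
    matLin B (toE v) = toE (B *ᵥ v) :=
  Matrix.toEuclideanLin_toLp B v

lemma continuous_matLin :
    Continuous (matLin (K := K)) :=
  LinearMap.continuous_of_finiteDimensional matLin

lemma infDist_cone_le_self (B : Matrix (Fin K) (Fin K) ℝ) (w : EuclideanSpace ℝ (Fin K)) :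
    infDist w (cone B) ≤ ‖w‖ := by
  have := infDist_le_dist_of_mem (zero_mem_cone B) (x := w)
  rwa [dist_zero_right] at this

/-- Quantitative comparison of distances to the cones of two matrices. -/
lemma infDist_cone_le {B : Matrix (Fin K) (Fin K) ℝ} (hB : IsUnit B.det)
    (B' : Matrix (Fin K) (Fin K) ℝ) (w : EuclideanSpace ℝ (Fin K)) :
    infDist w (cone B') ≤ infDist w (cone B)
      + ‖matLin (B' - B)‖ * (‖matLin B⁻¹‖ * (2 * ‖w‖)) := by
  obtain ⟨p, hp, hnorm, -, -⟩ := exists_proj hB w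
  obtain ⟨θ, hθ, hpθ⟩ := hp
  have hq : toE (B' *ᵥ θ) ∈ cone B' := ⟨θ, hθ, rfl⟩
  have h1 : infDist w (cone B') ≤ dist w (toE (B' *ᵥ θ)) := infDist_le_dist_of_mem hq
  have h2 : dist w (toE (B' *ᵥ θ)) ≤ dist w p + dist p (toE (B' *ᵥ θ)) := dist_triangle _ _ _
  have hθE : (toE θ : EuclideanSpace ℝ (Fin K)) = matLin B⁻¹ p := by
    rw [hpθ, matLin_toE, Matrix.mulVec_mulVec, Matrix.nonsing_inv_mul _ hB,
      Matrix.one_mulVec]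
  have hθnorm : ‖(toE θ : EuclideanSpace ℝ (Fin K))‖ ≤ ‖matLin B⁻¹‖ * ‖p‖ := by
    rw [hθE]; exact (matLin B⁻¹).le_opNorm p
  have hpnorm : ‖p‖ ≤ 2 * ‖w‖ := by
    have e1 : ‖p‖ ≤ ‖p - w‖ + ‖w‖ := by
      have := norm_add_le (p - w) w
      rwa [sub_add_cancel] at this
    have e2 : ‖p - w‖ = infDist w (cone B) := by rw [norm_sub_rev]; exact hnorm
    have e3 : infDist w (cone B) ≤ ‖w‖ := infDist_cone_le_self B w
    linarith
  have h3 : dist p (toE (B' *ᵥ θ)) ≤ ‖matLin (B' - B)‖ * (‖matLin B⁻¹‖ * (2 * ‖w‖)) := by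
    have e0 : dist p (toE (B' *ᵥ θ)) = ‖matLin (B' - B) (toE θ)‖ := by
      rw [map_sub, dist_eq_norm]
      have : (matLin (B' : Matrix (Fin K) (Fin K) ℝ) - matLin B) (toE θ)
          = toE (B' *ᵥ θ) - toE (B *ᵥ θ) := by
        simp [ContinuousLinearMap.sub_apply, matLin_toE]
      rw [this, ← hpθ, norm_sub_rev]
    rw [e0]
    calc ‖matLin (B' - B) (toE θ)‖ ≤ ‖matLin (B' - B)‖ * ‖(toE θ : EuclideanSpace ℝ (Fin K))‖ :=
          (matLin (B' - B)).le_opNorm _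
      _ ≤ ‖matLin (B' - B)‖ * (‖matLin B⁻¹‖ * (2 * ‖w‖)) := by
          apply mul_le_mul_of_nonneg_left _ (norm_nonneg _)
          calc ‖(toE θ : EuclideanSpace ℝ (Fin K))‖ ≤ ‖matLin B⁻¹‖ * ‖p‖ := hθnorm
            _ ≤ ‖matLin B⁻¹‖ * (2 * ‖w‖) :=
                mul_le_mul_of_nonneg_left hpnorm (norm_nonneg _)
  have h4 : dist w p = infDist w (cone B) := by rw [dist_eq_norm]; exact hnorm
  linarith


lemma posSemidef_smul_nonneg {A : Matrix (Fin K) (Fin K) ℝ} (hA : A.PosSemidef)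
    {c : ℝ} (hc : 0 ≤ c) : (c • A).PosSemidef := by
  refine Matrix.PosSemidef.of_dotProduct_mulVec_nonneg ?_ ?_
  · have h1 := hA.1
    unfold Matrix.IsHermitian at h1 ⊢
    rw [Matrix.conjTranspose_smul, h1]
    congr 1
  · intro x
    rw [Matrix.smul_mulVec, dotProduct_smul, smul_eq_mul]
    exact mul_nonneg hc (hA.dotProduct_mulVec_nonneg x)

lemma entry_sq_le_trace {B : Matrix (Fin K) (Fin K) ℝ} (hB : B.PosSemidef) (i j : Fin K) :
    (B i j) ^ 2 ≤ (B * B).trace := by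
  have hsymm : ∀ a b : Fin K, B b a = B a b := by
    intro a b
    have := hB.1.apply b a
    simpa using this.symm
  have htr : (B * B).trace = ∑ a : Fin K, ∑ b : Fin K, (B a b) ^ 2 := by
    rw [Matrix.trace]
    congr 1
    ext a
    rw [Matrix.diag]
    rw [Matrix.mul_apply]
    congr 1
    ext b
    rw [hsymm a b, pow_two]
  rw [htr]
  calc (B i j) ^ 2 ≤ ∑ b : Fin K, (B i b) ^ 2 :=
        Finset.single_le_sum (fun b _ => sq_nonneg (B i b)) (Finset.mem_univ j)
    _ ≤ ∑ a : Fin K, ∑ b : Fin K, (B a b) ^ 2 :=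
        Finset.single_le_sum (fun a _ => Finset.sum_nonneg fun b _ => sq_nonneg (B a b))
          (Finset.mem_univ i)

set_option maxHeartbeats 1000000 in
lemma tendsto_sqrt_seq {Ahat : ℕ → Matrix (Fin K) (Fin K) ℝ}
    (hpsd : ∀ I, (Ahat I).PosSemidef) {M : Matrix (Fin K) (Fin K) ℝ} (hM : M.PosSemidef)
    (hconv : Tendsto Ahat atTop (nhds M)) :
    Tendsto (fun I => (hpsd I).sqrt) atTop (nhds hM.sqrt) := by
  set B : ℕ → Matrix (Fin K) (Fin K) ℝ := fun I => (hpsd I).sqrt with hBdef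
  have hBpsd : ∀ I, (B I).PosSemidef := fun I => (hpsd I).posSemidef_sqrt
  have hBB : ∀ I, B I * B I = Ahat I := fun I => (hpsd I).sqrt_mul_self
  have htr : Tendsto (fun I => (Ahat I).trace) atTop (nhds M.trace) :=
    ((continuous_id.matrix_trace).tendsto M).comp hconv
  set c : ℝ := M.trace + 1 with hc
  obtain ⟨N, hN⟩ := (htr.eventually_lt_const (by linarith : M.trace < c)).exists_forall_of_atTop
  apply Filter.tendsto_of_subseq_tendsto
  intro ns hns
  obtain ⟨N2, hN2⟩ := (hns.eventually (eventually_ge_atTop N)).exists_forall_of_atTop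
  set b : ℝ := Real.sqrt c with hb
  set Q : Set (Matrix (Fin K) (Fin K) ℝ) := {A | ∀ i j, A i j ∈ Set.Icc (-b) b} with hQdef
  have hQ : IsCompact Q := by
    have heq : Q = Set.univ.pi (fun _ : Fin K => Set.univ.pi
        fun _ : Fin K => Set.Icc (-b) b) := by
      ext A
      exact ⟨fun h i _ j _ => h i j, fun h i j => h i (Set.mem_univ i) j (Set.mem_univ j)⟩
    rw [heq]
    exact isCompact_univ_pi fun i => isCompact_univ_pi fun j => isCompact_Icc
  set y : ℕ → Matrix (Fin K) (Fin K) ℝ := fun n => B (ns (n + N2)) with hy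
  have hymem : ∀ n, y n ∈ Q := by
    intro n i j
    have hidx : N ≤ ns (n + N2) := hN2 _ (Nat.le_add_left _ _)
    have htrb : (Ahat (ns (n + N2))).trace ≤ c := le_of_lt (hN _ hidx)
    have hsq : (y n i j) ^ 2 ≤ c := by
      calc (y n i j) ^ 2 ≤ (y n * y n).trace := entry_sq_le_trace (hBpsd _) i j
        _ = (Ahat (ns (n + N2))).trace := by rw [hy]; rw [hBB]
        _ ≤ c := htrb
    have habs : |y n i j| ≤ b := by
      rw [hb, ← Real.sqrt_sq_eq_abs]
      exact Real.sqrt_le_sqrt hsq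
    exact abs_le.mp habs
  haveI : FirstCountableTopology (Matrix (Fin K) (Fin K) ℝ) :=
    inferInstanceAs (FirstCountableTopology (Fin K → Fin K → ℝ))
  obtain ⟨L, hLQ, φ, hφmono, hφtend⟩ := hQ.tendsto_subseq hymem
  have hidxT : Tendsto (fun n => ns (φ n + N2)) atTop atTop :=
    hns.comp (tendsto_atTop_mono (fun n => Nat.le_add_right (φ n) N2) hφmono.tendsto_atTop)
  have hAy : Tendsto (fun n => Ahat (ns (φ n + N2))) atTop (nhds M) := hconv.comp hidxT
  have hyy : Tendsto (fun n => y (φ n) * y (φ n)) atTop (nhds (L * L)) :=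
    ((continuous_id.matrix_mul continuous_id).tendsto L).comp hφtend
  have heq2 : (fun n => y (φ n) * y (φ n)) = fun n => Ahat (ns (φ n + N2)) :=
    funext fun n => hBB _
  rw [heq2] at hyy
  have hLL : L * L = M := tendsto_nhds_unique hyy hAy
  have hLpsd : L.PosSemidef := by
    refine Matrix.PosSemidef.of_dotProduct_mulVec_nonneg ?_ ?_
    · have ht : Tendsto (fun n => (y (φ n))ᴴ) atTop (nhds Lᴴ) :=
        ((continuous_id.matrix_conjTranspose).tendsto L).comp hφtend
      have heq3 : (fun n => (y (φ n))ᴴ) = fun n => y (φ n) := funext fun n => (hBpsd _).1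
      rw [heq3] at ht
      exact tendsto_nhds_unique ht hφtend
    · intro x
      have hcont : Continuous fun A : Matrix (Fin K) (Fin K) ℝ =>
          dotProduct (star x) (A *ᵥ x) :=
        continuous_const.dotProduct (continuous_id.matrix_mulVec continuous_const)
      have ht : Tendsto (fun n => dotProduct (star x) ((y (φ n)) *ᵥ x)) atTop
          (nhds (dotProduct (star x) (L *ᵥ x))) := (hcont.tendsto L).comp hφtend
      exact ge_of_tendsto ht (Filter.Eventually.of_forall fun n => (hBpsd _).dotProduct_mulVec_nonneg x)
  have hLR : L = hM.sqrt := hLpsd.eq_sqrt_of_sq_eq hM (by rw [pow_two, hLL])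
  refine ⟨fun n => φ n + N2, ?_⟩
  have : (fun n => B (ns (φ n + N2))) = y ∘ φ := rfl
  rw [hBdef] at *
  rw [this]
  rwa [hLR] at hφtend


lemma measurable_tan' : Measurable Real.tan := by
  have : Real.tan = fun x => Real.sin x / Real.cos x := funext fun x => Real.tan_eq_sin_div_cos x
  rw [this]
  exact Real.measurable_sin.div Real.measurable_cos

/-- coordinate arctan as a bounded continuous function -/
noncomputable def arctanCoord (k : Fin K) : BoundedContinuousFunction (Fin K → ℝ) ℝ :=
  BoundedContinuousFunction.mkOfBound
    ⟨fun v => Real.arctan (v k), Real.continuous_arctan.comp (continuous_apply k)⟩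
    Real.pi
    (by
      intro x y
      rw [Real.dist_eq]
      have h1 : |Real.arctan (x k)| < Real.pi / 2 :=
        abs_lt.mpr ⟨Real.neg_pi_div_two_lt_arctan _, Real.arctan_lt_pi_div_two _⟩
      have h2 : |Real.arctan (y k)| < Real.pi / 2 :=
        abs_lt.mpr ⟨Real.neg_pi_div_two_lt_arctan _, Real.arctan_lt_pi_div_two _⟩
      calc |Real.arctan (x k) - Real.arctan (y k)|
          ≤ |Real.arctan (x k)| + |Real.arctan (y k)| := abs_sub _ _
        _ ≤ Real.pi := by linarith)

section Meas

variable {Ω : ℕ → Type} [∀ I, MeasurableSpace (Ω I)]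

lemma eventually_aesm
    (P : (I : ℕ) → Measure (Ω I)) [∀ I, IsProbabilityMeasure (P I)]
    (W : (I : ℕ) → Ω I → (Fin K → ℝ))
    (π : Measure (Fin K → ℝ)) [IsProbabilityMeasure π]
    (hweak : ∀ g : BoundedContinuousFunction (Fin K → ℝ) ℝ,
      Tendsto (fun I => ∫ ω, g (W I ω) ∂(P I)) atTop (nhds (∫ w, g w ∂π)))
    (h : BoundedContinuousFunction (Fin K → ℝ) ℝ) :
    ∀ᶠ I in atTop, AEStronglyMeasurable (fun ω => h (W I ω)) (P I) := by
  by_contra hcon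
  rw [Filter.not_eventually] at hcon
  obtain ⟨ns, hns, hbad⟩ := Filter.frequently_iff_seq_forall.mp hcon
  have hzero : ∀ (g : BoundedContinuousFunction (Fin K → ℝ) ℝ),
      (∀ n, ¬ AEStronglyMeasurable (fun ω => g (W (ns n) ω)) (P (ns n))) →
      (∫ w, g w ∂π) = 0 := by
    intro g hg
    have h1 : Tendsto (fun n => ∫ ω, g (W (ns n) ω) ∂(P (ns n))) atTop
        (nhds (∫ w, g w ∂π)) := (hweak g).comp hns
    have h2 : (fun n => ∫ ω, g (W (ns n) ω) ∂(P (ns n))) = fun _ => (0 : ℝ) := by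
      funext n
      exact integral_undef (fun hint => hg n hint.aestronglyMeasurable)
    rw [h2] at h1
    exact tendsto_nhds_unique h1 tendsto_const_nhds
  have e1 : (∫ w, h w ∂π) = 0 := hzero h hbad
  set h' : BoundedContinuousFunction (Fin K → ℝ) ℝ :=
    h + BoundedContinuousFunction.const _ (1 : ℝ) with hh'
  have hbad' : ∀ n, ¬ AEStronglyMeasurable (fun ω => h' (W (ns n) ω)) (P (ns n)) := by
    intro n hm
    apply hbad n
    have : (fun ω => h (W (ns n) ω)) = fun ω => h' (W (ns n) ω) - 1 := by
      funext ω
      simp [hh']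
    rw [this]
    exact hm.sub aestronglyMeasurable_const
  have e2 : (∫ w, h' w ∂π) = 0 := hzero h' hbad'
  have e3 : (∫ w, h' w ∂π) = (∫ w, h w ∂π) + 1 := by
    have : (∫ w, h' w ∂π) = ∫ w, (h w + 1) ∂π := by
      congr 1
    rw [this, integral_add (h.integrable π) (integrable_const 1), integral_const]
    simp
  rw [e2, e1] at e3
  norm_num at e3

lemma eventually_aemeasurable
    (P : (I : ℕ) → Measure (Ω I)) [∀ I, IsProbabilityMeasure (P I)]
    (W : (I : ℕ) → Ω I → (Fin K → ℝ))
    (π : Measure (Fin K → ℝ)) [IsProbabilityMeasure π]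
    (hweak : ∀ g : BoundedContinuousFunction (Fin K → ℝ) ℝ,
      Tendsto (fun I => ∫ ω, g (W I ω) ∂(P I)) atTop (nhds (∫ w, g w ∂π))) :
    ∀ᶠ I in atTop, AEMeasurable (W I) (P I) := by
  have hall : ∀ᶠ I in atTop, ∀ k : Fin K,
      AEStronglyMeasurable (fun ω => arctanCoord k (W I ω)) (P I) :=
    Filter.eventually_all.mpr fun k => eventually_aesm P W π hweak (arctanCoord k)
  filter_upwards [hall] with I hI
  have hcoord : ∀ k : Fin K, AEMeasurable (fun ω => (W I ω) k) (P I) := by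
    intro k
    have h1 : AEMeasurable (fun ω => Real.arctan ((W I ω) k)) (P I) := (hI k).aemeasurable
    have h2 : AEMeasurable (fun ω => Real.tan (Real.arctan ((W I ω) k))) (P I) :=
      measurable_tan'.comp_aemeasurable h1
    have h3 : (fun ω => Real.tan (Real.arctan ((W I ω) k))) = fun ω => (W I ω) k :=
      funext fun ω => Real.tan_arctan _
    rwa [h3] at h2
  choose G hGmeas hGeq using fun k => hcoord k
  refine ⟨fun ω k => G k ω, measurable_pi_lambda _ hGmeas, ?_⟩
  have hae : ∀ᵐ ω ∂(P I), ∀ k, (W I ω) k = G k ω := MeasureTheory.ae_all_iff.2 hGeq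
  filter_upwards [hae] with ω hω
  funext k
  exact hω k

end Meas


noncomputable def statFn (B : Matrix (Fin K) (Fin K) ℝ) (v : Fin K → ℝ) : ℝ :=
  v ⬝ᵥ v - (infDist (toE v) (cone B)) ^ 2

lemma continuous_statFn (B : Matrix (Fin K) (Fin K) ℝ) : Continuous (statFn B) := by
  apply Continuous.sub
  · exact continuous_id.dotProduct continuous_id
  · exact ((continuous_infDist_pt (cone B)).comp toE.continuous).pow 2

lemma statFn_nonneg (B : Matrix (Fin K) (Fin K) ℝ) (v : Fin K → ℝ) : 0 ≤ statFn B v := by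
  unfold statFn
  rw [← norm_toE_sq]
  have h1 := infDist_cone_le_self B (toE v)
  have h2 : (0:ℝ) ≤ infDist (toE v) (cone B) := infDist_nonneg
  nlinarith

lemma statFn_le (B : Matrix (Fin K) (Fin K) ℝ) (v : Fin K → ℝ) :
    statFn B v ≤ ‖(toE v : EuclideanSpace ℝ (Fin K))‖ ^ 2 := by
  unfold statFn
  rw [← norm_toE_sq]
  nlinarith [sq_nonneg (infDist (toE v) (cone B))]

noncomputable def statBCF (g : BoundedContinuousFunction ℝ ℝ) (B : Matrix (Fin K) (Fin K) ℝ) :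
    BoundedContinuousFunction (Fin K → ℝ) ℝ :=
  g.compContinuous ⟨statFn B, continuous_statFn B⟩

lemma statBCF_apply (g : BoundedContinuousFunction ℝ ℝ) (B : Matrix (Fin K) (Fin K) ℝ)
    (v : Fin K → ℝ) : statBCF g B v = g (statFn B v) := rfl

noncomputable def bump (ρ : ℝ) : BoundedContinuousFunction (Fin K → ℝ) ℝ :=
  BoundedContinuousFunction.mkOfBound
    ⟨fun v => min 1 (max 0 (‖(toE v : EuclideanSpace ℝ (Fin K))‖ - ρ)),
      continuous_const.min (continuous_const.max
        ((continuous_norm.comp toE.continuous).sub continuous_const))⟩ 1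
    (by
      intro x y
      rw [Real.dist_eq]
      have hx0 : (0:ℝ) ≤ min 1 (max 0 (‖(toE x : EuclideanSpace ℝ (Fin K))‖ - ρ)) :=
        le_min zero_le_one (le_max_left _ _)
      have hy0 : (0:ℝ) ≤ min 1 (max 0 (‖(toE y : EuclideanSpace ℝ (Fin K))‖ - ρ)) :=
        le_min zero_le_one (le_max_left _ _)
      have hx1 := min_le_left (1:ℝ) (max 0 (‖(toE x : EuclideanSpace ℝ (Fin K))‖ - ρ))
      have hy1 := min_le_left (1:ℝ) (max 0 (‖(toE y : EuclideanSpace ℝ (Fin K))‖ - ρ))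
      rw [abs_sub_le_iff]
      constructor <;> simp only [ContinuousMap.coe_mk] <;> linarith)

lemma bump_apply (ρ : ℝ) (v : Fin K → ℝ) :
    bump ρ v = min 1 (max 0 (‖(toE v : EuclideanSpace ℝ (Fin K))‖ - ρ)) := rfl

lemma bump_nonneg (ρ : ℝ) (v : Fin K → ℝ) : 0 ≤ bump ρ v :=
  le_min zero_le_one (le_max_left _ _)

lemma bump_le_one (ρ : ℝ) (v : Fin K → ℝ) : bump ρ v ≤ 1 := min_le_left _ _

lemma bump_eq_one (ρ : ℝ) (v : Fin K → ℝ)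
    (h : ρ + 1 ≤ ‖(toE v : EuclideanSpace ℝ (Fin K))‖) : bump ρ v = 1 := by
  rw [bump_apply]
  have h1 : (1:ℝ) ≤ ‖(toE v : EuclideanSpace ℝ (Fin K))‖ - ρ := by linarith
  rw [max_eq_right (by linarith : (0:ℝ) ≤ ‖(toE v : EuclideanSpace ℝ (Fin K))‖ - ρ)]
  exact min_eq_left h1

lemma bump_le_indicator (ρ : ℝ) (v : Fin K → ℝ) :
    bump ρ v ≤ Set.indicator {v : Fin K → ℝ | ρ < ‖(toE v : EuclideanSpace ℝ (Fin K))‖}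
      (fun _ => (1:ℝ)) v := by
  by_cases h : ρ < ‖(toE v : EuclideanSpace ℝ (Fin K))‖
  · rw [Set.indicator_apply, if_pos (show v ∈ {v : Fin K → ℝ |
        ρ < ‖(toE v : EuclideanSpace ℝ (Fin K))‖} from h)]
    exact bump_le_one ρ v
  · rw [Set.indicator_apply, if_neg (show v ∉ {v : Fin K → ℝ |
        ρ < ‖(toE v : EuclideanSpace ℝ (Fin K))‖} from h)]
    rw [bump_apply]
    push_neg at h
    rw [max_eq_left (by linarith : ‖(toE v : EuclideanSpace ℝ (Fin K))‖ - ρ ≤ 0)]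
    simp

lemma measurableSet_norm_gt (ρ : ℝ) :
    MeasurableSet {v : Fin K → ℝ | ρ < ‖(toE v : EuclideanSpace ℝ (Fin K))‖} :=
  (isOpen_lt continuous_const (continuous_norm.comp toE.continuous)).measurableSet

lemma exists_rho (π : Measure (Fin K → ℝ)) [IsProbabilityMeasure π] {ε₁ : ℝ} (hε₁ : 0 < ε₁) :
    ∃ ρ : ℝ, 0 ≤ ρ ∧
      (π {v : Fin K → ℝ | ρ < ‖(toE v : EuclideanSpace ℝ (Fin K))‖}).toReal ≤ ε₁ := by
  set s : ℕ → Set (Fin K → ℝ) :=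
    fun n => {v : Fin K → ℝ | (n:ℝ) < ‖(toE v : EuclideanSpace ℝ (Fin K))‖} with hs
  have hmeas : ∀ n, MeasurableSet (s n) := fun n => measurableSet_norm_gt _
  have hanti : Antitone s := by
    intro n m hnm v hv
    simp only [hs, Set.mem_setOf_eq] at hv ⊢
    have : (n:ℝ) ≤ (m:ℝ) := Nat.cast_le.mpr hnm
    linarith
  have hempty : (⋂ n, s n) = ∅ := by
    ext v
    simp only [Set.mem_iInter, Set.mem_empty_iff_false, iff_false, not_forall]
    obtain ⟨n, hn⟩ := exists_nat_gt (‖(toE v : EuclideanSpace ℝ (Fin K))‖)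
    exact ⟨n, by simp only [hs, Set.mem_setOf_eq]; push_neg; linarith⟩
  have htend := MeasureTheory.tendsto_measure_iInter_atTop
    (μ := π) (s := s) (fun n => (hmeas n).nullMeasurableSet) hanti
    ⟨0, measure_ne_top π _⟩
  rw [hempty, measure_empty] at htend
  have hofe : (0:ENNReal) < ENNReal.ofReal ε₁ := ENNReal.ofReal_pos.mpr hε₁
  obtain ⟨n, hn⟩ := ((tendsto_order.1 htend).2 _ hofe).exists
  refine ⟨(n:ℝ), Nat.cast_nonneg n, ?_⟩
  exact ENNReal.toReal_le_of_le_ofReal hε₁.le hn.le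

lemma integrable_bcf_comp {α : Type} [MeasurableSpace α] {P : Measure α}
    [IsProbabilityMeasure P] (h : BoundedContinuousFunction (Fin K → ℝ) ℝ)
    {W : α → Fin K → ℝ} (hw : AEMeasurable W P) :
    Integrable (fun ω => h (W ω)) P := by
  have hm : AEStronglyMeasurable (fun ω => h (W ω)) P :=
    (h.continuous.measurable.comp_aemeasurable hw).aestronglyMeasurable
  exact Integrable.mono' (integrable_const ‖h‖) hm
    (Filter.Eventually.of_forall fun ω => h.norm_coe_le_norm _)

section Core

variable {Ω : ℕ → Type} [∀ I, MeasurableSpace (Ω I)]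

set_option maxHeartbeats 1000000 in
lemma core (hK : 0 < K)
    (P : (I : ℕ) → Measure (Ω I)) [∀ I, IsProbabilityMeasure (P I)]
    (W : (I : ℕ) → Ω I → (Fin K → ℝ))
    (π : Measure (Fin K → ℝ)) [IsProbabilityMeasure π]
    (hweak : ∀ g : BoundedContinuousFunction (Fin K → ℝ) ℝ,
      Tendsto (fun I => ∫ ω, g (W I ω) ∂(P I)) atTop (nhds (∫ w, g w ∂π)))
    (B : ℕ → Matrix (Fin K) (Fin K) ℝ) (R : Matrix (Fin K) (Fin K) ℝ)
    (hRdet : IsUnit R.det)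
    (htendB : Tendsto B atTop (nhds R))
    (hBinv : Tendsto (fun I => (B I)⁻¹) atTop (nhds R⁻¹))
    (hBdet : ∀ᶠ I in atTop, IsUnit (B I).det)
    (g : BoundedContinuousFunction ℝ ℝ) :
    Tendsto (fun I => ∫ ω, (statBCF g (B I)) (W I ω) ∂(P I)) atTop
      (nhds (∫ v, (statBCF g R) v ∂π)) := by
  rw [Metric.tendsto_nhds]
  intro ε hε
  set L := ∫ v, (statBCF g R) v ∂π with hL
  set ng := ‖g‖ with hng
  have hng0 : 0 ≤ ng := norm_nonneg _
  set ε₁ : ℝ := ε / (16 * (ng + 1)) with hε₁def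
  have hε₁ : 0 < ε₁ := by rw [hε₁def]; positivity
  obtain ⟨ρ, hρ0, hρ⟩ := exists_rho π hε₁
  -- uniform continuity of g on a compact interval
  have hunif := (isCompact_Icc (a := (-1:ℝ)) (b := (ρ+1)^2 + 1)).uniformContinuousOn_of_continuous
    (g.continuous.continuousOn)
  rw [Metric.uniformContinuousOn_iff] at hunif
  obtain ⟨δ₂, hδ₂pos, hδ₂⟩ := hunif (ε/8) (by positivity)
  set κ : ℝ := ‖matLin (R⁻¹ : Matrix (Fin K) (Fin K) ℝ)‖ + 1 with hκdef
  have hκ1 : (1:ℝ) ≤ κ := by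
    rw [hκdef]; have := norm_nonneg (matLin (R⁻¹ : Matrix (Fin K) (Fin K) ℝ)); linarith
  have hκ0 : (0:ℝ) < κ := by linarith
  set ε₂ : ℝ := δ₂ / (8 * κ * ((ρ+1)^2 + 1)) with hε₂def
  have hε₂ : 0 < ε₂ := by rw [hε₂def]; positivity
  -- eventual facts
  have htendΦ : Tendsto (fun I => matLin (B I)) atTop (nhds (matLin R)) :=
    (continuous_matLin.tendsto R).comp htendB
  have hev1 : ∀ᶠ I in atTop, ‖matLin (B I - R)‖ < ε₂ := by
    have h0 : Tendsto (fun I => ‖matLin (B I) - matLin R‖) atTop (nhds 0) :=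
      tendsto_iff_norm_sub_tendsto_zero.mp htendΦ
    have heq : (fun I => ‖matLin (B I) - matLin R‖) = fun I => ‖matLin (B I - R)‖ := by
      funext I; rw [map_sub]
    rw [heq] at h0
    exact h0.eventually_lt_const hε₂
  have hev2 : ∀ᶠ I in atTop, ‖matLin ((B I)⁻¹)‖ < κ := by
    have h0 : Tendsto (fun I => ‖matLin ((B I)⁻¹)‖) atTop
        (nhds ‖matLin (R⁻¹ : Matrix (Fin K) (Fin K) ℝ)‖) :=
      ((continuous_norm.comp continuous_matLin).tendsto _).comp hBinv
    exact h0.eventually_lt_const (by rw [hκdef]; linarith)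
  have hev4 : ∀ᶠ I in atTop, AEMeasurable (W I) (P I) :=
    eventually_aemeasurable P W π hweak
  have hev5 : ∀ᶠ I in atTop, ∫ ω, (bump ρ) (W I ω) ∂(P I) < 2 * ε₁ := by
    have h0 := Metric.tendsto_nhds.mp (hweak (bump ρ)) ε₁ hε₁
    filter_upwards [h0] with I hI
    rw [Real.dist_eq, abs_sub_lt_iff] at hI
    have hbπ : ∫ w, (bump ρ) w ∂π ≤ ε₁ := by
      have hind : Integrable ({v : Fin K → ℝ |
          ρ < ‖(toE v : EuclideanSpace ℝ (Fin K))‖}.indicator fun _ => (1:ℝ)) π :=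
        (integrable_const (1:ℝ)).indicator (measurableSet_norm_gt ρ)
      have hmono := integral_mono ((bump ρ).integrable π) hind (bump_le_indicator ρ)
      rw [integral_indicator_const (1:ℝ) (measurableSet_norm_gt ρ)] at hmono
      calc ∫ w, (bump ρ) w ∂π
          ≤ (π {v : Fin K → ℝ | ρ < ‖(toE v : EuclideanSpace ℝ (Fin K))‖}).toReal • (1:ℝ) :=
            hmono
        _ = (π {v : Fin K → ℝ | ρ < ‖(toE v : EuclideanSpace ℝ (Fin K))‖}).toReal := by
            rw [smul_eq_mul, mul_one]
        _ ≤ ε₁ := hρ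
    linarith [hI.1]
  have hev6 : ∀ᶠ I in atTop,
      dist (∫ ω, (statBCF g R) (W I ω) ∂(P I)) L < ε / 8 :=
    Metric.tendsto_nhds.mp (hweak (statBCF g R)) (ε/8) (by positivity)
  filter_upwards [hev1, hev2, hBdet, hev4, hev5, hev6] with I h1 h2 h3 h4 h5 h6
  -- uniform estimate on the ball of radius ρ + 1
  have hFdiff : ∀ v : Fin K → ℝ, ‖(toE v : EuclideanSpace ℝ (Fin K))‖ ≤ ρ + 1 →
      |statFn (B I) v - statFn R v| < δ₂ := by
    intro v hv
    set w : EuclideanSpace ℝ (Fin K) := toE v with hw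
    set d1 := infDist w (cone (B I)) with hd1
    set d2 := infDist w (cone R) with hd2
    have hd1n : 0 ≤ d1 := infDist_nonneg
    have hd2n : 0 ≤ d2 := infDist_nonneg
    have hd1le : d1 ≤ ρ + 1 := le_trans (infDist_cone_le_self _ _) hv
    have hd2le : d2 ≤ ρ + 1 := le_trans (infDist_cone_le_self _ _) hv
    have hRκ : ‖matLin (R⁻¹ : Matrix (Fin K) (Fin K) ℝ)‖ ≤ κ := by rw [hκdef]; linarith
    have hwn : (0:ℝ) ≤ ‖w‖ := norm_nonneg w
    have hbnd : ε₂ * (κ * (2 * (ρ+1))) = ε₂ * κ * (2 * (ρ+1)) := by ring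
    have hinner1 : ‖matLin (R⁻¹ : Matrix (Fin K) (Fin K) ℝ)‖ * (2 * ‖w‖)
        ≤ κ * (2 * (ρ+1)) :=
      mul_le_mul hRκ (by linarith) (by positivity) hκ0.le
    have hinner2 : ‖matLin ((B I)⁻¹)‖ * (2 * ‖w‖) ≤ κ * (2 * (ρ+1)) :=
      mul_le_mul h2.le (by linarith) (by positivity) hκ0.le
    have est1 : d1 ≤ d2 + ε₂ * (κ * (2 * (ρ+1))) := by
      have h := infDist_cone_le hRdet (B I) w
      rw [← hd1, ← hd2] at h
      have hb : ‖matLin (B I - R)‖ * (‖matLin (R⁻¹ : Matrix (Fin K) (Fin K) ℝ)‖ * (2 * ‖w‖))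
          ≤ ε₂ * (κ * (2 * (ρ+1))) :=
        mul_le_mul h1.le hinner1 (by positivity) hε₂.le
      exact h.trans (add_le_add_right hb _)
    have est2 : d2 ≤ d1 + ε₂ * (κ * (2 * (ρ+1))) := by
      have h := infDist_cone_le h3 R w
      rw [← hd1, ← hd2] at h
      have heqn : ‖matLin (R - B I)‖ = ‖matLin (B I - R)‖ := by
        rw [map_sub, map_sub, norm_sub_rev]
      have hb : ‖matLin (R - B I)‖ * (‖matLin ((B I)⁻¹)‖ * (2 * ‖w‖))
          ≤ ε₂ * (κ * (2 * (ρ+1))) := by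
        rw [heqn]
        exact mul_le_mul h1.le hinner2 (by positivity) hε₂.le
      exact h.trans (add_le_add_right hb _)
    have habs : |d1 - d2| ≤ ε₂ * (κ * (2 * (ρ+1))) := by
      rw [abs_sub_le_iff]; constructor <;> linarith
    have hsq : |statFn (B I) v - statFn R v| = |d1 + d2| * |d2 - d1| := by
      have : statFn (B I) v - statFn R v = (d1 + d2) * (d2 - d1) := by
        unfold statFn
        rw [← hw, ← hd1, ← hd2]
        ring
      rw [this, abs_mul]
    have habs2 : |d2 - d1| ≤ ε₂ * (κ * (2 * (ρ+1))) := by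
      rw [abs_sub_comm]; exact habs
    have hsum : |d1 + d2| ≤ 2 * (ρ + 1) := by
      rw [abs_of_nonneg (by linarith)]; linarith
    have hfinal : |statFn (B I) v - statFn R v| ≤ 2 * (ρ+1) * (ε₂ * (κ * (2 * (ρ+1)))) := by
      rw [hsq]
      have := mul_le_mul hsum habs2 (abs_nonneg _) (by positivity)
      linarith
    have harith : 2 * (ρ+1) * (ε₂ * (κ * (2 * (ρ+1)))) < δ₂ := by
      have hden : (0:ℝ) < 8 * κ * ((ρ+1)^2 + 1) := by positivity
      have hkey : ε₂ * (8 * κ * ((ρ+1)^2 + 1)) = δ₂ := by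
        rw [hε₂def]
        exact div_mul_cancel₀ _ hden.ne'
      have hp1 : (0:ℝ) < κ * ε₂ := mul_pos hκ0 hε₂
      have hp2 : (0:ℝ) ≤ κ * (ρ+1)^2 * ε₂ :=
        mul_nonneg (mul_nonneg hκ0.le (sq_nonneg _)) hε₂.le
      nlinarith [hp1, hp2, hkey]
    linarith
  -- pointwise bound
  have hpt : ∀ ω, |(statBCF g (B I)) (W I ω) - (statBCF g R) (W I ω)|
      ≤ ε/8 + (2*ng) * (bump ρ) (W I ω) := by
    intro ω
    set v := W I ω with hv
    by_cases hcase : ‖(toE v : EuclideanSpace ℝ (Fin K))‖ ≤ ρ + 1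
    · have hmem1 : statFn (B I) v ∈ Set.Icc (-1 : ℝ) ((ρ+1)^2 + 1) := by
        constructor
        · linarith [statFn_nonneg (B I) v]
        · have := statFn_le (B I) v
          have h2 : ‖(toE v : EuclideanSpace ℝ (Fin K))‖^2 ≤ (ρ+1)^2 :=
            pow_le_pow_left₀ (norm_nonneg _) hcase 2
          linarith
      have hmem2 : statFn R v ∈ Set.Icc (-1 : ℝ) ((ρ+1)^2 + 1) := by
        constructor
        · linarith [statFn_nonneg R v]
        · have := statFn_le R v
          have h2 : ‖(toE v : EuclideanSpace ℝ (Fin K))‖^2 ≤ (ρ+1)^2 :=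
            pow_le_pow_left₀ (norm_nonneg _) hcase 2
          linarith
      have hdist : dist (statFn (B I) v) (statFn R v) < δ₂ := by
        rw [Real.dist_eq]; exact hFdiff v hcase
      have := hδ₂ _ hmem1 _ hmem2 hdist
      rw [Real.dist_eq] at this
      rw [statBCF_apply, statBCF_apply]
      have hb0 : 0 ≤ (2*ng) * (bump ρ) v :=
        mul_nonneg (by linarith) (bump_nonneg ρ v)
      linarith [this]
    · push_neg at hcase
      have hb1 : (bump ρ) v = 1 := bump_eq_one ρ v hcase.le
      rw [statBCF_apply, statBCF_apply, hb1, mul_one]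
      have hg1 : |g (statFn (B I) v)| ≤ ng := by
        rw [← Real.norm_eq_abs]; exact g.norm_coe_le_norm _
      have hg2 : |g (statFn R v)| ≤ ng := by
        rw [← Real.norm_eq_abs]; exact g.norm_coe_le_norm _
      calc |g (statFn (B I) v) - g (statFn R v)|
          ≤ |g (statFn (B I) v)| + |g (statFn R v)| := abs_sub _ _
        _ ≤ 2 * ng := by linarith
        _ ≤ ε/8 + 2*ng := by linarith
  -- integrability
  have hint1 : Integrable (fun ω => (statBCF g (B I)) (W I ω)) (P I) :=
    integrable_bcf_comp _ h4
  have hint2 : Integrable (fun ω => (statBCF g R) (W I ω)) (P I) :=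
    integrable_bcf_comp _ h4
  have hint3 : Integrable (fun ω => (bump ρ) (W I ω)) (P I) :=
    integrable_bcf_comp _ h4
  have hbump0 : 0 ≤ ∫ ω, (bump ρ) (W I ω) ∂(P I) :=
    integral_nonneg fun ω => bump_nonneg ρ _
  -- main estimate
  have hdiff : |(∫ ω, (statBCF g (B I)) (W I ω) ∂(P I))
      - ∫ ω, (statBCF g R) (W I ω) ∂(P I)| ≤ ε/8 + (2*ng) * (2*ε₁) := by
    rw [← integral_sub hint1 hint2]
    have hstep1 : |∫ ω, ((statBCF g (B I)) (W I ω) - (statBCF g R) (W I ω)) ∂(P I)|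
        ≤ ∫ ω, |(statBCF g (B I)) (W I ω) - (statBCF g R) (W I ω)| ∂(P I) := by
      have := norm_integral_le_integral_norm
        (f := fun ω => (statBCF g (B I)) (W I ω) - (statBCF g R) (W I ω)) (μ := P I)
      simpa [Real.norm_eq_abs] using this
    have hint4 : Integrable (fun ω =>
        |(statBCF g (B I)) (W I ω) - (statBCF g R) (W I ω)|) (P I) := (hint1.sub hint2).abs
    have hint5 : Integrable (fun ω => ε/8 + (2*ng) * (bump ρ) (W I ω)) (P I) :=
      (integrable_const (ε/8)).add (hint3.const_mul (2*ng))
    have hstep2 : ∫ ω, |(statBCF g (B I)) (W I ω) - (statBCF g R) (W I ω)| ∂(P I)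
        ≤ ∫ ω, (ε/8 + (2*ng) * (bump ρ) (W I ω)) ∂(P I) :=
      integral_mono hint4 hint5 hpt
    have hstep3 : ∫ ω, (ε/8 + (2*ng) * (bump ρ) (W I ω)) ∂(P I)
        = ε/8 + (2*ng) * ∫ ω, (bump ρ) (W I ω) ∂(P I) := by
      rw [integral_add (integrable_const _) (hint3.const_mul _), integral_const]
      simp [integral_const_mul]
    have hstep4 : (2*ng) * ∫ ω, (bump ρ) (W I ω) ∂(P I) ≤ (2*ng) * (2*ε₁) :=
      mul_le_mul_of_nonneg_left h5.le (by linarith)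
    calc |∫ ω, ((statBCF g (B I)) (W I ω) - (statBCF g R) (W I ω)) ∂(P I)|
        ≤ ∫ ω, |(statBCF g (B I)) (W I ω) - (statBCF g R) (W I ω)| ∂(P I) := hstep1
      _ ≤ ∫ ω, (ε/8 + (2*ng) * (bump ρ) (W I ω)) ∂(P I) := hstep2
      _ = ε/8 + (2*ng) * ∫ ω, (bump ρ) (W I ω) ∂(P I) := hstep3
      _ ≤ ε/8 + (2*ng) * (2*ε₁) := by linarith
  have htail : (2*ng) * (2*ε₁) ≤ ε/4 := by
    have h16 : (0:ℝ) < 16 * (ng + 1) := by positivity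
    have hε₁eq : ε₁ * (16 * (ng + 1)) = ε := by
      rw [hε₁def]; field_simp
    nlinarith [hε₁.le, hng0]
  calc dist (∫ ω, (statBCF g (B I)) (W I ω) ∂(P I)) L
      ≤ dist (∫ ω, (statBCF g (B I)) (W I ω) ∂(P I))
          (∫ ω, (statBCF g R) (W I ω) ∂(P I))
        + dist (∫ ω, (statBCF g R) (W I ω) ∂(P I)) L := dist_triangle _ _ _
    _ < (ε/8 + ε/4) + ε/8 := by
        apply add_lt_add_of_le_of_lt
        · rw [Real.dist_eq]
          linarith [hdiff]
        · exact h6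
    _ < ε := by linarith

end Core


lemma isSymm_of_posSemidef {A : Matrix (Fin K) (Fin K) ℝ} (hA : A.PosSemidef) : A.IsSymm := by
  ext i j
  rw [Matrix.transpose_apply]
  have h := hA.1.apply i j
  simpa using h

lemma sqrt_det_isUnit {A : Matrix (Fin K) (Fin K) ℝ} (hA : A.PosDef) :
    IsUnit (hA.posSemidef.sqrt).det := by
  have hm : hA.posSemidef.sqrt * hA.posSemidef.sqrt = A := hA.posSemidef.sqrt_mul_self
  have hdet : (hA.posSemidef.sqrt).det * (hA.posSemidef.sqrt).det = A.det := by
    rw [← Matrix.det_mul, hm]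
  have hApos : 0 < A.det := hA.det_pos
  rw [isUnit_iff_ne_zero]
  intro h0
  rw [h0, mul_zero] at hdet
  linarith

lemma cone_smul_sqrt {A : Matrix (Fin K) (Fin K) ℝ} (hA : A.PosDef) {c : ℝ} (hc : 0 < c)
    (hcA : (c • A).PosSemidef) : cone hcA.sqrt = cone hA.posSemidef.sqrt := by
  have hpsd : (Real.sqrt c • hA.posSemidef.sqrt).PosSemidef :=
    posSemidef_smul_nonneg hA.posSemidef.posSemidef_sqrt (Real.sqrt_nonneg c)
  have hsq : (Real.sqrt c • hA.posSemidef.sqrt) ^ 2 = c • A := by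
    rw [smul_pow, Real.sq_sqrt hc.le, pow_two, hA.posSemidef.sqrt_mul_self]
  have h1 : Real.sqrt c • hA.posSemidef.sqrt = hcA.sqrt :=
    hpsd.eq_sqrt_of_sq_eq hcA hsq
  rw [← h1, cone_smul_eq _ (Real.sqrt_pos.2 hc)]

lemma key_statFn (hK : 0 < K) {Sg : Matrix (Fin K) (Fin K) ℝ} (hSg : Sg.PosDef)
    {B : Matrix (Fin K) (Fin K) ℝ} (hcone : cone (hSg.posSemidef.sqrt) = cone B)
    (x : Fin K → ℝ) :
    (max 0 (sSup {y : ℝ | ∃ lam : Fin K → ℝ, (∀ k, 0 ≤ lam k) ∧ lam ≠ 0 ∧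
        y = lam ⬝ᵥ x / Real.sqrt (lam ⬝ᵥ Sg *ᵥ lam)})) ^ 2
      = statFn B ((hSg.posSemidef.sqrt)⁻¹ *ᵥ x) := by
  set S := hSg.posSemidef.sqrt with hSdef
  have hdet : IsUnit S.det := sqrt_det_isUnit hSg
  have hsymm : S.IsSymm := isSymm_of_posSemidef hSg.posSemidef.posSemidef_sqrt
  have hx : S *ᵥ (S⁻¹ *ᵥ x) = x := by
    rw [Matrix.mulVec_mulVec, Matrix.mul_nonsing_inv _ hdet, Matrix.one_mulVec]
  have hS2 : S * S = Sg := hSg.posSemidef.sqrt_mul_self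
  conv_lhs => rw [← hx, ← hS2]
  rw [key_identity hK hsymm hdet (S⁻¹ *ᵥ x)]
  unfold statFn
  rw [hcone]

lemma target_eq {M : Matrix (Fin K) (Fin K) ℝ} (hM : M.PosDef) (v : Fin K → ℝ) :
    v ⬝ᵥ v - sInf {y : ℝ | ∃ θ : Fin K → ℝ, (∀ k, 0 ≤ θ k) ∧
      y = (((hM.posSemidef.sqrt)⁻¹ *ᵥ v) - θ) ⬝ᵥ M *ᵥ (((hM.posSemidef.sqrt)⁻¹ *ᵥ v) - θ)}
    = statFn (hM.posSemidef.sqrt) v := by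
  set R := hM.posSemidef.sqrt with hRdef
  have hdet : IsUnit R.det := sqrt_det_isUnit hM
  have hsymm : R.IsSymm := isSymm_of_posSemidef hM.posSemidef.posSemidef_sqrt
  have hquad : ∀ θ : Fin K → ℝ,
      ((R⁻¹ *ᵥ v) - θ) ⬝ᵥ M *ᵥ ((R⁻¹ *ᵥ v) - θ)
      = (v - R *ᵥ θ) ⬝ᵥ (v - R *ᵥ θ) := by
    intro θ
    have hRv : R *ᵥ ((R⁻¹ *ᵥ v) - θ) = v - R *ᵥ θ := by
      rw [Matrix.mulVec_sub, Matrix.mulVec_mulVec, Matrix.mul_nonsing_inv _ hdet,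
        Matrix.one_mulVec]
    have hM2 : ((R⁻¹ *ᵥ v) - θ) ⬝ᵥ M *ᵥ ((R⁻¹ *ᵥ v) - θ)
        = ((R⁻¹ *ᵥ v) - θ) ⬝ᵥ (R * R) *ᵥ ((R⁻¹ *ᵥ v) - θ) := by
      rw [hM.posSemidef.sqrt_mul_self]
    rw [hM2, quad_eq hsymm, hRv]
  have hset : {y : ℝ | ∃ θ : Fin K → ℝ, (∀ k, 0 ≤ θ k) ∧
      y = ((R⁻¹ *ᵥ v) - θ) ⬝ᵥ M *ᵥ ((R⁻¹ *ᵥ v) - θ)}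
      = {y : ℝ | ∃ θ : Fin K → ℝ, (∀ k, 0 ≤ θ k) ∧
        y = (v - R *ᵥ θ) ⬝ᵥ (v - R *ᵥ θ)} := by
    ext y
    constructor
    · rintro ⟨θ, hθ, rfl⟩
      exact ⟨θ, hθ, hquad θ⟩
    · rintro ⟨θ, hθ, rfl⟩
      exact ⟨θ, hθ, (hquad θ).symm⟩
  rw [hset, sInf_eq_infDist hdet v]
  rfl

end Stmt10Aux

open Stmt10Aux in
/-- Theorem 1: under (i) `I⁻¹ Σ_I → M` positive definite and
(ii) weak convergence of `Σ_I^{−1/2}(T_I − μ_I)` to the product `π` of `K`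
standard Gaussians, the statistic `max(0, A_I)²`, where
`A_I = sup_{λ ∈ Λ₊} λᵀ(T_I − μ_I)/(λᵀ Σ_I λ)^{1/2}`, converges weakly to the
pushforward of `π` under
`w ↦ wᵀw − inf_{θ ≥ 0} (M^{−1/2} w − θ)ᵀ M (M^{−1/2} w − θ)`,
i.e. to the chi-bar-squared distribution `χ̄²(M⁻¹, Λ₊)`.  Weak convergence is
expressed by convergence of integrals of bounded continuous functions. -/
theorem stmt10 {K : ℕ} (hK : 0 < K)
    (Ω : ℕ → Type) [∀ I, MeasurableSpace (Ω I)]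
    (P : (I : ℕ) → MeasureTheory.Measure (Ω I))
    [∀ I, IsProbabilityMeasure (P I)]
    (T : (I : ℕ) → Ω I → (Fin K → ℝ))
    (μ : ℕ → (Fin K → ℝ))
    (Sig : ℕ → Matrix (Fin K) (Fin K) ℝ)
    (hSigSymm : ∀ I, (Sig I).IsSymm) (hSig : ∀ I, (Sig I).PosDef)
    (M : Matrix (Fin K) (Fin K) ℝ) (hM : M.PosDef)
    (hconv : Tendsto (fun I : ℕ => ((I : ℝ))⁻¹ • Sig I) atTop (nhds M))
    (π : MeasureTheory.Measure (Fin K → ℝ))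
    (hπ : π = MeasureTheory.Measure.pi (fun _ : Fin K => gaussianReal 0 1))
    (hweak : ∀ g : BoundedContinuousFunction (Fin K → ℝ) ℝ,
      Tendsto
        (fun I => ∫ ω, g ((((hSig I).posSemidef.sqrt)⁻¹) *ᵥ (T I ω - μ I)) ∂(P I))
        atTop (nhds (∫ w, g w ∂π))) :
    ∀ g : BoundedContinuousFunction ℝ ℝ,
      Tendsto
        (fun I => ∫ ω, g ((max 0 (sSup {y : ℝ | ∃ lam : Fin K → ℝ,
            (∀ k, 0 ≤ lam k) ∧ lam ≠ 0 ∧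
            y = lam ⬝ᵥ (T I ω - μ I) / Real.sqrt (lam ⬝ᵥ (Sig I) *ᵥ lam)})) ^ 2) ∂(P I))
        atTop
        (nhds (∫ w, g (w ⬝ᵥ w - sInf {y : ℝ | ∃ θ : Fin K → ℝ, (∀ k, 0 ≤ θ k) ∧
          y = (((hM.posSemidef.sqrt)⁻¹ *ᵥ w) - θ) ⬝ᵥ M *ᵥ (((hM.posSemidef.sqrt)⁻¹ *ᵥ w) - θ)}) ∂π)) := by
  intro g
  haveI hπprob : IsProbabilityMeasure π := by
    rw [hπ]; infer_instance
  have hhatpsd : ∀ I : ℕ, (((I:ℝ))⁻¹ • Sig I).PosSemidef := fun I =>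
    posSemidef_smul_nonneg (hSig I).posSemidef (inv_nonneg.mpr (Nat.cast_nonneg I))
  have htendB : Tendsto (fun I => (hhatpsd I).sqrt) atTop (nhds hM.posSemidef.sqrt) :=
    tendsto_sqrt_seq hhatpsd hM.posSemidef hconv
  have hRdet : IsUnit (hM.posSemidef.sqrt).det := sqrt_det_isUnit hM
  have hRdet0 : (hM.posSemidef.sqrt).det ≠ 0 := by
    simpa [isUnit_iff_ne_zero] using hRdet
  have hdetc : Tendsto (fun I => ((hhatpsd I).sqrt).det) atTop
      (nhds (hM.posSemidef.sqrt).det) :=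
    ((continuous_id.matrix_det).tendsto _).comp htendB
  have hBdetEv : ∀ᶠ I in atTop, IsUnit ((hhatpsd I).sqrt).det := by
    filter_upwards [hdetc.eventually_ne hRdet0] with I hI
    exact isUnit_iff_ne_zero.mpr hI
  have hContInv : ContinuousAt Ring.inverse (hM.posSemidef.sqrt).det := by
    have heq : (Ring.inverse : ℝ → ℝ) = Inv.inv := Ring.inverse_eq_inv'
    rw [heq]
    exact continuousAt_inv₀ hRdet0
  have hBinv : Tendsto (fun I => ((hhatpsd I).sqrt)⁻¹) atTop
      (nhds (hM.posSemidef.sqrt)⁻¹) :=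
    ((continuousAt_matrix_inv _ hContInv).tendsto).comp htendB
  have hcore := core hK P (fun I ω => ((hSig I).posSemidef.sqrt)⁻¹ *ᵥ (T I ω - μ I)) π
    hweak (fun I => (hhatpsd I).sqrt) hM.posSemidef.sqrt hRdet htendB hBinv hBdetEv g
  have htargetfun : (fun v : Fin K → ℝ => g (v ⬝ᵥ v - sInf {y : ℝ | ∃ θ : Fin K → ℝ,
      (∀ k, 0 ≤ θ k) ∧
      y = (((hM.posSemidef.sqrt)⁻¹ *ᵥ v) - θ) ⬝ᵥ M *ᵥ (((hM.posSemidef.sqrt)⁻¹ *ᵥ v) - θ)}))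
      = fun v => (statBCF g hM.posSemidef.sqrt) v := by
    funext v
    rw [statBCF_apply, target_eq hM v]
  have hI2 : (∫ w, g (w ⬝ᵥ w - sInf {y : ℝ | ∃ θ : Fin K → ℝ, (∀ k, 0 ≤ θ k) ∧
      y = (((hM.posSemidef.sqrt)⁻¹ *ᵥ w) - θ) ⬝ᵥ M *ᵥ (((hM.posSemidef.sqrt)⁻¹ *ᵥ w) - θ)}) ∂π)
      = ∫ v, (statBCF g hM.posSemidef.sqrt) v ∂π := by
    rw [htargetfun]
  rw [hI2]
  refine Filter.Tendsto.congr' ?_ hcore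
  filter_upwards [eventually_ge_atTop 1] with I hI1
  have hcpos : (0:ℝ) < ((I:ℝ))⁻¹ := by
    have h0 : (0:ℝ) < (I:ℝ) := by exact_mod_cast hI1
    positivity
  have hc : cone ((hSig I).posSemidef.sqrt) = cone ((hhatpsd I).sqrt) :=
    (cone_smul_sqrt (hSig I) hcpos (hhatpsd I)).symm
  congr 1
  funext ω
  rw [statBCF_apply]
  exact congrArg g (key_statFn hK (hSig I) hc (T I ω - μ I)).symm
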